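/- Bound for derivatives of the reciprocal two-phase: for μ₁,μ₂ ∈ {+1,-1}, every l ≥ 1 and all ξ₁,ξ₂ ∈ ℝ, |∂^l_{ξ₁,ξ₂} Φ_{μ₁μ₂}(ξ₁,ξ₂)| ≤ C_l · min{1, |Φ_{μ₁μ₂}(ξ₁,ξ₂)|}, where Φ_{μ₁μ₂}(ξ₁,ξ₂) = -Λ(ξ₁+ξ₂) + μ₁Λ(ξ₁) + μ₂Λ(ξ₂) and Λ(ξ)=√(1+ξ²), and ∂^l denotes any l-th order partial derivative in (ξ₁,ξ₂). -/

import Mathlib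

/-- Λ(ξ) = √(1+ξ²) -/
noncomputable def Lam (ξ : ℝ) : ℝ := Real.sqrt (1 + ξ ^ 2)

/-- The quadratic phase Φ_{μ₁μ₂}(ξ₁,ξ₂) = -Λ(ξ₁+ξ₂) + μ₁Λ(ξ₁) + μ₂Λ(ξ₂). -/
noncomputable def Phi2 (μ₁ μ₂ ξ₁ ξ₂ : ℝ) : ℝ :=
  -Lam (ξ₁ + ξ₂) + μ₁ * Lam ξ₁ + μ₂ * Lam ξ₂

lemma Lam_pos (ξ : ℝ) : 0 < Lam ξ := Real.sqrt_pos.mpr (by positivity)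

lemma Lam_sq (ξ : ℝ) : Lam ξ ^ 2 = 1 + ξ ^ 2 := Real.sq_sqrt (by positivity)

lemma one_le_Lam (ξ : ℝ) : 1 ≤ Lam ξ := by
  nlinarith [Lam_sq ξ, Lam_pos ξ, sq_nonneg ξ]

lemma Lam_neg (ξ : ℝ) : Lam (-ξ) = Lam ξ := by simp [Lam]

lemma abs_le_Lam (ξ : ℝ) : |ξ| ≤ Lam ξ := by
  nlinarith [Lam_sq ξ, Lam_pos ξ, sq_abs ξ, abs_nonneg ξ]

lemma Lam_mono {a b : ℝ} (h : a ^ 2 ≤ b ^ 2) : Lam a ≤ Lam b :=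
  Real.sqrt_le_sqrt (by linarith)

lemma Lam_add_le_abs (a b : ℝ) : Lam (a + b) ≤ Lam b + |a| := by
  have hab : a * b ≤ |a| * Lam b := by
    calc a * b ≤ |a * b| := le_abs_self _
    _ = |a| * |b| := abs_mul a b
    _ ≤ |a| * Lam b := mul_le_mul_of_nonneg_left (abs_le_Lam b) (abs_nonneg a)
  have h : 1 + (a + b) ^ 2 ≤ (Lam b + |a|) ^ 2 := by
    nlinarith [Lam_sq b, sq_abs a]
  calc Lam (a + b) = Real.sqrt (1 + (a+b)^2) := rfl
  _ ≤ Real.sqrt ((Lam b + |a|) ^ 2) := Real.sqrt_le_sqrt h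
  _ = Lam b + |a| := Real.sqrt_sq (by nlinarith [Lam_pos b, abs_nonneg a])

lemma keylow1 (a b : ℝ) : 1 / (2 * Lam a) ≤ Lam a + Lam b - Lam (a + b) := by
  have h1 := Lam_add_le_abs a b
  have h2 : 1 / (2 * Lam a) ≤ Lam a - |a| := by
    rw [div_le_iff₀ (mul_pos two_pos (Lam_pos a))]
    nlinarith [Lam_sq a, abs_le_Lam a, abs_nonneg a, sq_abs a, Lam_pos a]
  linarith

lemma keylow2 (a b : ℝ) : 1 / (2 * Lam b) ≤ Lam a + Lam b - Lam (a + b) := by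
  have := keylow1 b a
  rw [add_comm b a] at this
  linarith

lemma lam_mul_ge (a b : ℝ) : 1 + a * b ≤ Lam a * Lam b := by
  rcases le_or_gt (1 + a * b) 0 with h | h
  · nlinarith [Lam_pos a, Lam_pos b]
  · nlinarith [Lam_sq a, Lam_sq b, sq_nonneg (a - b), mul_pos (Lam_pos a) (Lam_pos b),
      sq_nonneg (Lam a * Lam b - (1 + a*b)), sq_nonneg (Lam a * Lam b + (1 + a*b))]

lemma keylow3 (a b : ℝ) : 1 / (2 * Lam (a + b)) ≤ Lam a + Lam b - Lam (a + b) := by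
  have ht2 : (Real.sqrt (4 + (a+b) ^ 2)) ^ 2 = 4 + (a+b) ^ 2 := Real.sq_sqrt (by positivity)
  have htpos : 0 < Real.sqrt (4 + (a+b) ^ 2) := Real.sqrt_pos.mpr (by positivity)
  have hab : Real.sqrt (4 + (a+b) ^ 2) ≤ Lam a + Lam b := by
    have hmul := lam_mul_ge a b
    have h : 4 + (a+b) ^ 2 ≤ (Lam a + Lam b) ^ 2 := by
      nlinarith [Lam_sq a, Lam_sq b]
    calc Real.sqrt (4 + (a+b) ^ 2) ≤ Real.sqrt ((Lam a + Lam b) ^ 2) := Real.sqrt_le_sqrt h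
    _ = Lam a + Lam b := Real.sqrt_sq (by nlinarith [Lam_pos a, Lam_pos b])
  have hdiff : 1 / (2 * Lam (a+b)) ≤ Real.sqrt (4 + (a+b) ^ 2) - Lam (a+b) := by
    rw [div_le_iff₀ (mul_pos two_pos (Lam_pos (a+b)))]
    have hts : Real.sqrt (4 + (a+b) ^ 2) ≤ 2 * Lam (a+b) := by
      calc Real.sqrt (4 + (a+b) ^ 2) ≤ Real.sqrt ((2 * Lam (a+b)) ^ 2) :=
        Real.sqrt_le_sqrt (by nlinarith [Lam_sq (a+b)])
      _ = 2 * Lam (a+b) := Real.sqrt_sq (by nlinarith [Lam_pos (a+b)])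
    have hge : Lam (a+b) ≤ Real.sqrt (4 + (a+b) ^ 2) := by
      nlinarith [Lam_sq (a+b), Lam_pos (a+b), htpos]
    nlinarith [Lam_sq (a+b), Lam_pos (a+b), mul_nonneg (sub_nonneg.mpr hge)
      (sub_nonneg.mpr hts)]
  linarith

lemma half_bound (t : ℝ) : 1 / (2 * Lam t) ≤ 1 / 2 := by
  rw [div_le_iff₀ (mul_pos two_pos (Lam_pos t))]
  have := one_le_Lam t
  linarith

lemma phi_low (μ₁ μ₂ : ℝ) (h1 : μ₁ = 1 ∨ μ₁ = -1) (h2 : μ₂ = 1 ∨ μ₂ = -1) (ξ₁ ξ₂ : ℝ) :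
    1 / (2 * Lam ξ₁) ≤ |Phi2 μ₁ μ₂ ξ₁ ξ₂| ∧ 1 / (2 * Lam ξ₂) ≤ |Phi2 μ₁ μ₂ ξ₁ ξ₂| ∧
      1 / (2 * Lam (ξ₁ + ξ₂)) ≤ |Phi2 μ₁ μ₂ ξ₁ ξ₂| := by
  have hpos := le_abs_self (Phi2 μ₁ μ₂ ξ₁ ξ₂)
  have hneg := neg_le_abs (Phi2 μ₁ μ₂ ξ₁ ξ₂)
  rcases h1 with h1 | h1 <;> rcases h2 with h2 | h2 <;> subst h1 <;> subst h2 <;>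
    simp only [Phi2, one_mul, neg_one_mul] at hpos hneg ⊢
  · exact ⟨by linarith [keylow1 ξ₁ ξ₂], by linarith [keylow2 ξ₁ ξ₂], by linarith [keylow3 ξ₁ ξ₂]⟩
  · -- μ₁ = 1, μ₂ = -1 : -Φ = Λξ₂ + Λ(ξ₁+ξ₂) - Λξ₁ with a = -ξ₂, b = ξ₁+ξ₂
    have e : -ξ₂ + (ξ₁ + ξ₂) = ξ₁ := by ring
    have k1 := keylow1 (-ξ₂) (ξ₁ + ξ₂)
    have k2 := keylow2 (-ξ₂) (ξ₁ + ξ₂)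
    have k3 := keylow3 (-ξ₂) (ξ₁ + ξ₂)
    rw [e, Lam_neg] at k1 k2 k3
    exact ⟨by linarith, by linarith, by linarith⟩
  · -- μ₁ = -1, μ₂ = 1 : -Φ = Λξ₁ + Λ(ξ₁+ξ₂) - Λξ₂ with a = -ξ₁, b = ξ₁+ξ₂
    have e : -ξ₁ + (ξ₁ + ξ₂) = ξ₂ := by ring
    have k1 := keylow1 (-ξ₁) (ξ₁ + ξ₂)
    have k2 := keylow2 (-ξ₁) (ξ₁ + ξ₂)
    have k3 := keylow3 (-ξ₁) (ξ₁ + ξ₂)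
    rw [e, Lam_neg] at k1 k2 k3
    exact ⟨by linarith, by linarith, by linarith⟩
  · -- μ₁ = μ₂ = -1
    have h1 := one_le_Lam ξ₁; have h2 := one_le_Lam ξ₂; have h3 := one_le_Lam (ξ₁ + ξ₂)
    exact ⟨by linarith [half_bound ξ₁], by linarith [half_bound ξ₂],
      by linarith [half_bound (ξ₁ + ξ₂)]⟩

lemma div_Lam_le_one (u : ℝ) : u / Lam u ≤ 1 :=
  (div_le_one (Lam_pos u)).mpr (le_trans (le_abs_self u) (abs_le_Lam u))

lemma aligned_core {u v : ℝ} (hu : 0 ≤ u) (hv : 0 ≤ v) :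
    |u / Lam u - v / Lam v| ≤ 1 / Lam u + 1 / Lam v := by
  have key : ∀ w : ℝ, 0 ≤ w → 1 - w / Lam w ≤ 1 / Lam w := by
    intro w hw
    rw [sub_le_iff_le_add, ← add_div, le_div_iff₀ (Lam_pos w)]
    nlinarith [Lam_sq w, Lam_pos w]
  have h1 := key u hu
  have h2 := key v hv
  have h3 := div_Lam_le_one u
  have h4 := div_Lam_le_one v
  have h5 : 0 ≤ u / Lam u := div_nonneg hu (Lam_pos u).le
  have h6 : 0 ≤ v / Lam v := div_nonneg hv (Lam_pos v).le
  rw [abs_sub_le_iff]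
  constructor <;> linarith

lemma aligned (u v : ℝ) (h : 0 ≤ u * v) :
    |u / Lam u - v / Lam v| ≤ 1 / Lam u + 1 / Lam v := by
  rcases mul_nonneg_iff.mp h with ⟨hu, hv⟩ | ⟨hu, hv⟩
  · exact aligned_core hu hv
  · have h0 := aligned_core (neg_nonneg.mpr hu) (neg_nonneg.mpr hv)
    rw [Lam_neg, Lam_neg, neg_div, neg_div, neg_sub_neg, abs_sub_comm] at h0
    exact h0

lemma anti_aligned (μ₁ μ₂ : ℝ) (h1 : μ₁ = 1 ∨ μ₁ = -1) (h2 : μ₂ = 1 ∨ μ₂ = -1) (ξ₁ ξ₂ : ℝ)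
    (h : (μ₁ * ξ₁) * (ξ₁ + ξ₂) < 0) : 1 ≤ |Phi2 μ₁ μ₂ ξ₁ ξ₂| := by
  have hpos := le_abs_self (Phi2 μ₁ μ₂ ξ₁ ξ₂)
  have hneg := neg_le_abs (Phi2 μ₁ μ₂ ξ₁ ξ₂)
  rcases h1 with h1 | h1 <;> subst h1
  · -- μ₁ = 1 : ξ₁ and ξ₁+ξ₂ have opposite signs ⇒ Λξ₂ dominates
    rw [one_mul] at h
    have hL1 : Lam ξ₁ ≤ Lam ξ₂ := by
      apply Lam_mono
      rcases mul_neg_iff.mp h with ⟨ha, hb⟩ | ⟨ha, hb⟩ <;> nlinarith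
    have hLs : Lam (ξ₁ + ξ₂) ≤ Lam ξ₂ := by
      apply Lam_mono
      rcases mul_neg_iff.mp h with ⟨ha, hb⟩ | ⟨ha, hb⟩ <;> nlinarith
    rcases h2 with h2 | h2 <;> subst h2 <;>
      simp only [Phi2, one_mul, neg_one_mul] at hpos hneg ⊢
    · linarith [one_le_Lam ξ₁]
    · linarith [one_le_Lam (ξ₁ + ξ₂)]
  · -- μ₁ = -1 : ξ₁ and ξ₁+ξ₂ have the same sign ⇒ Λξ₂ is dominated
    have h' : 0 < ξ₁ * (ξ₁ + ξ₂) := by nlinarith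
    have hcase : Lam ξ₂ ≤ Lam ξ₁ ∨ Lam ξ₂ ≤ Lam (ξ₁ + ξ₂) := by
      rcases mul_pos_iff.mp h' with ⟨ha, hb⟩ | ⟨ha, hb⟩ <;> rcases le_or_gt 0 ξ₂ with hc | hc
      · exact Or.inr (Lam_mono (by nlinarith))
      · exact Or.inl (Lam_mono (by nlinarith))
      · exact Or.inl (Lam_mono (by nlinarith))
      · exact Or.inr (Lam_mono (by nlinarith))
    rcases h2 with h2 | h2 <;> subst h2 <;>
      simp only [Phi2, one_mul, neg_one_mul] at hpos hneg ⊢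
    · rcases hcase with hc | hc
      · linarith [one_le_Lam (ξ₁ + ξ₂)]
      · linarith [one_le_Lam ξ₁]
    · linarith [one_le_Lam ξ₁, one_le_Lam ξ₂, one_le_Lam (ξ₁ + ξ₂)]

lemma hasDerivAt_Lam (ξ : ℝ) : HasDerivAt Lam (ξ / Lam ξ) ξ := by
  have h : HasDerivAt (fun x : ℝ => 1 + x ^ 2) (2 * ξ) ξ := by
    simpa using (hasDerivAt_pow 2 ξ).const_add 1
  have h2 := h.sqrt (by positivity)
  have he : ξ / Lam ξ = 2 * ξ / (2 * Real.sqrt (1 + ξ ^ 2)) := by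
    rw [Lam, mul_div_mul_left _ _ two_ne_zero]
  rw [he]
  exact h2

open scoped ContDiff in
lemma contDiff_Lam : ContDiff ℝ ∞ Lam :=
  ContDiff.sqrt (contDiff_const.add (contDiff_id.pow 2)) (fun x => by positivity)

noncomputable def qpoly : ℕ → Polynomial ℝ
  | 0 => Polynomial.X
  | n + 1 => Polynomial.derivative (qpoly n) * (1 + Polynomial.X ^ 2)
      - Polynomial.C (2 * (n : ℝ) + 1) * (Polynomial.X * qpoly n)

lemma iter_Lam_formula (n : ℕ) (ξ : ℝ) :
    iteratedDeriv (n + 1) Lam ξ = (qpoly n).eval ξ * Lam ξ / (1 + ξ ^ 2) ^ (n + 1) := by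
  induction n generalizing ξ with
  | zero =>
    rw [iteratedDeriv_one, (hasDerivAt_Lam ξ).deriv]
    have h1 : (1 : ℝ) + ξ ^ 2 = Lam ξ ^ 2 := (Lam_sq ξ).symm
    simp only [qpoly, Polynomial.eval_X, pow_one, h1]
    field_simp [(Lam_pos ξ).ne']
    ring
  | succ n ih =>
    have hfun : iteratedDeriv (n + 1) Lam =
        fun x => (qpoly n).eval x * Lam x / (1 + x ^ 2) ^ (n + 1) := funext ih
    rw [iteratedDeriv_succ, hfun]
    have hden : ∀ x : ℝ, (0:ℝ) < (1 + x ^ 2) ^ (n + 1) := fun x => by positivity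
    have hq := Polynomial.hasDerivAt (qpoly n) ξ
    have hL := hasDerivAt_Lam ξ
    have h0 : HasDerivAt (fun x : ℝ => 1 + x ^ 2) (2 * ξ) ξ := by
      simpa using (hasDerivAt_pow 2 ξ).const_add 1
    have hpow := h0.pow (n + 1)
    have hinv := hpow.inv (hden ξ).ne'
    have H := (hq.mul hL).mul hinv
    have heq : (fun x => (qpoly n).eval x * Lam x / (1 + x ^ 2) ^ (n + 1)) =
        fun x => ((qpoly n).eval x * Lam x) * ((1 + x ^ 2) ^ (n + 1))⁻¹ := by
      funext x; rw [div_eq_mul_inv]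
    rw [heq, (show HasDerivAt (fun x => ((qpoly n).eval x * Lam x) * ((1 + x ^ 2) ^ (n + 1))⁻¹) _ ξ from H).deriv]
    simp only [Pi.mul_apply, Pi.inv_apply, Pi.pow_apply]
    have hL2 := Lam_sq ξ
    have hLpos := Lam_pos ξ
    simp only [qpoly, Polynomial.eval_sub, Polynomial.eval_mul, Polynomial.eval_add,
      Polynomial.eval_pow, Polynomial.eval_X, Polynomial.eval_C, Polynomial.eval_one,
      Nat.add_sub_cancel]
    rw [show (1:ℝ) + ξ ^ 2 = Lam ξ ^ 2 from hL2.symm]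
    push_cast
    field_simp [hLpos.ne']
    ring

lemma qpoly_natDegree (n : ℕ) : (qpoly n).natDegree ≤ n + 1 := by
  induction n with
  | zero => simp [qpoly]
  | succ n ih =>
    rw [qpoly]
    apply le_trans (Polynomial.natDegree_sub_le _ _)
    apply max_le
    · apply le_trans (Polynomial.natDegree_mul_le)
      have h1 : (Polynomial.derivative (qpoly n)).natDegree ≤ n := by
        apply le_trans (Polynomial.natDegree_derivative_le _)
        omega
      have h2 : ((1 : Polynomial ℝ) + Polynomial.X ^ 2).natDegree ≤ 2 := by
        apply le_trans (Polynomial.natDegree_add_le _ _)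
        simp [Polynomial.natDegree_X_pow]
      omega
    · apply le_trans (Polynomial.natDegree_mul_le)
      have h2 : ((Polynomial.X : Polynomial ℝ) * qpoly n).natDegree ≤ 1 + (n + 1) := by
        apply le_trans (Polynomial.natDegree_mul_le)
        simp only [Polynomial.natDegree_X]
        omega
      simp only [Polynomial.natDegree_C]
      omega

lemma poly_bound (p : Polynomial ℝ) (d : ℕ) (hd : p.natDegree ≤ d) :
    ∃ C : ℝ, 0 < C ∧ ∀ ξ : ℝ, |p.eval ξ| ≤ C * Lam ξ ^ d := by
  refine ⟨(∑ i ∈ Finset.range (d + 1), |p.coeff i|) + 1, by positivity, fun ξ => ?_⟩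
  rw [Polynomial.eval_eq_sum_range' (lt_of_le_of_lt hd (Nat.lt_succ_self d))]
  have hL1 := one_le_Lam ξ
  have hLd : (0:ℝ) < Lam ξ ^ d := pow_pos (Lam_pos ξ) d
  calc |∑ i ∈ Finset.range (d + 1), p.coeff i * ξ ^ i|
      ≤ ∑ i ∈ Finset.range (d + 1), |p.coeff i * ξ ^ i| := Finset.abs_sum_le_sum_abs _ _
    _ ≤ ∑ i ∈ Finset.range (d + 1), |p.coeff i| * Lam ξ ^ d := by
        apply Finset.sum_le_sum
        intro i hi
        rw [abs_mul, abs_pow]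
        apply mul_le_mul_of_nonneg_left _ (abs_nonneg _)
        calc |ξ| ^ i ≤ Lam ξ ^ i := pow_le_pow_left₀ (abs_nonneg ξ) (abs_le_Lam ξ) i
          _ ≤ Lam ξ ^ d := pow_le_pow_right₀ hL1 (Nat.lt_succ_iff.mp (Finset.mem_range.mp hi))
    _ = (∑ i ∈ Finset.range (d + 1), |p.coeff i|) * Lam ξ ^ d := by
        rw [← Finset.sum_mul]
    _ ≤ ((∑ i ∈ Finset.range (d + 1), |p.coeff i|) + 1) * Lam ξ ^ d := by
        apply mul_le_mul_of_nonneg_right _ hLd.le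
        linarith

lemma iter_Lam_bound (n : ℕ) :
    ∃ C : ℝ, 0 < C ∧ ∀ ξ : ℝ, |iteratedDeriv (n + 1) Lam ξ| * Lam ξ ^ n ≤ C := by
  obtain ⟨C, hC, hCb⟩ := poly_bound (qpoly n) (n + 1) (qpoly_natDegree n)
  refine ⟨C, hC, fun ξ => ?_⟩
  have hLpos := Lam_pos ξ
  have habs : |iteratedDeriv (n + 1) Lam ξ| =
      |(qpoly n).eval ξ| * Lam ξ / Lam ξ ^ (2 * (n + 1)) := by
    rw [iter_Lam_formula, abs_div, abs_mul, abs_of_pos hLpos,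
      abs_of_pos (by positivity : (0:ℝ) < (1 + ξ ^ 2) ^ (n + 1)),
      show (1:ℝ) + ξ ^ 2 = Lam ξ ^ 2 from (Lam_sq ξ).symm, ← pow_mul]
  rw [habs]
  rw [div_mul_eq_mul_div, div_le_iff₀ (pow_pos hLpos _)]
  have key := hCb ξ
  calc |(qpoly n).eval ξ| * Lam ξ * Lam ξ ^ n
      ≤ (C * Lam ξ ^ (n + 1)) * (Lam ξ * Lam ξ ^ n) := by
        nlinarith [pow_pos hLpos (n + 1), pow_pos hLpos n, abs_nonneg ((qpoly n).eval ξ),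
          mul_pos hLpos (pow_pos hLpos n)]
    _ = C * Lam ξ ^ (2 * (n + 1)) := by
        rw [show 2 * (n + 1) = (n + 1) + (1 + n) by ring, pow_add, pow_add]
        ring

lemma deriv_aux (G : ℝ → ℝ) (hG : Differentiable ℝ G) (a b c d : ℝ) (y : ℝ) :
    deriv (fun t => a * G (c + t) + b * G t + d) y = a * deriv G (c + y) + b * deriv G y := by
  have h1 : HasDerivAt (fun t => G (c + t)) (deriv G (c + y)) y := by
    have := ((hG (c + y)).hasDerivAt).comp y ((hasDerivAt_id y).const_add c)
    simpa [Function.comp_def] using this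
  have h2 := (hG y).hasDerivAt
  exact (((h1.const_mul a).add (h2.const_mul b)).add_const d).deriv

open scoped ContDiff in
lemma iter_shift (g : ℝ → ℝ) (hg : ContDiff ℝ ∞ g) (a b c d : ℝ) :
    ∀ n : ℕ, ∀ y : ℝ, iteratedDeriv (n + 1) (fun t => a * g (c + t) + b * g t + d) y
      = a * iteratedDeriv (n + 1) g (c + y) + b * iteratedDeriv (n + 1) g y := by
  intro n
  induction n with
  | zero =>
    intro y
    simp only [Nat.zero_add]
    rw [iteratedDeriv_one, iteratedDeriv_one]
    exact deriv_aux g (hg.differentiable (by simp)) a b c d y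
  | succ m ih =>
    intro y
    rw [iteratedDeriv_succ]
    have hfun : iteratedDeriv (m + 1) (fun t => a * g (c + t) + b * g t + d)
        = fun z => a * iteratedDeriv (m + 1) g (c + z) + b * iteratedDeriv (m + 1) g z + 0 := by
      funext z; rw [ih z]; ring
    rw [hfun]
    have hdiff : Differentiable ℝ (iteratedDeriv (m + 1) g) := by
      have : ContDiff ℝ ∞ (iteratedDeriv (m + 1) g) := by
        rw [iteratedDeriv_eq_iterate]
        exact hg.iterate_deriv (m + 1)
      exact this.differentiable (by simp)
    rw [deriv_aux _ hdiff a b c (0:ℝ) y, ← iteratedDeriv_succ]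

lemma iter_iter (m k : ℕ) (f : ℝ → ℝ) :
    iteratedDeriv m (iteratedDeriv k f) = iteratedDeriv (m + k) f := by
  simp only [iteratedDeriv_eq_iterate]
  exact (Function.iterate_add_apply deriv m k f).symm

lemma iter_le (n : ℕ) : ∃ C : ℝ, 0 < C ∧ ∀ ξ : ℝ, |iteratedDeriv (n + 1) Lam ξ| ≤ C := by
  obtain ⟨C, hC, hb⟩ := iter_Lam_bound n
  refine ⟨C, hC, fun ξ => ?_⟩
  have h1 : (1:ℝ) ≤ Lam ξ ^ n := one_le_pow₀ (one_le_Lam ξ)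
  nlinarith [hb ξ, abs_nonneg (iteratedDeriv (n + 1) Lam ξ)]

lemma iter_le_inv (n : ℕ) :
    ∃ C : ℝ, 0 < C ∧ ∀ ξ : ℝ, |iteratedDeriv (n + 2) Lam ξ| ≤ C / Lam ξ := by
  obtain ⟨C, hC, hb⟩ := iter_Lam_bound (n + 1)
  refine ⟨C, hC, fun ξ => ?_⟩
  rw [le_div_iff₀ (Lam_pos ξ)]
  have h1 : Lam ξ ≤ Lam ξ ^ (n + 1) := by
    calc Lam ξ = Lam ξ ^ 1 := (pow_one _).symm
    _ ≤ Lam ξ ^ (n + 1) := pow_le_pow_right₀ (one_le_Lam ξ) (by omega)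
  calc |iteratedDeriv (n + 2) Lam ξ| * Lam ξ
      ≤ |iteratedDeriv (n + 2) Lam ξ| * Lam ξ ^ (n + 1) :=
        mul_le_mul_of_nonneg_left h1 (abs_nonneg _)
    _ ≤ C := hb ξ

lemma iter_one_eq (ξ : ℝ) : iteratedDeriv 1 Lam ξ = ξ / Lam ξ := by
  rw [iteratedDeriv_one, (hasDerivAt_Lam ξ).deriv]

lemma Lam_sign {μ : ℝ} (h : μ = 1 ∨ μ = -1) (x : ℝ) : Lam (μ * x) = Lam x := by
  rcases h with h | h <;> subst h <;> simp [Lam_neg]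

lemma abs_div_Lam_le_one (t : ℝ) : |t / Lam t| ≤ 1 := by
  rw [abs_div, abs_of_pos (Lam_pos t), div_le_one (Lam_pos t)]
  exact abs_le_Lam t

lemma Phi2_symm (μ₁ μ₂ ξ₁ ξ₂ : ℝ) : Phi2 μ₁ μ₂ ξ₁ ξ₂ = Phi2 μ₂ μ₁ ξ₂ ξ₁ := by
  unfold Phi2; rw [add_comm ξ₂ ξ₁]; ring

open scoped ContDiff in
lemma contDiff_iteratedDeriv_Lam (k : ℕ) : ContDiff ℝ ∞ (iteratedDeriv k Lam) := by
  rw [iteratedDeriv_eq_iterate]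
  exact contDiff_Lam.iterate_deriv k

lemma half_to_two {L P : ℝ} (hL : 0 < L) (h : 1 / (2 * L) ≤ P) : 1 / L ≤ 2 * P := by
  rw [div_le_iff₀ (mul_pos two_pos hL)] at h
  rw [div_le_iff₀ hL]
  nlinarith

/-- Every l-th order partial derivative (l = l₁ + l₂ ≥ 1) of the two-phase Φ_{μ₁μ₂}
    is bounded by a constant (depending only on l₁, l₂) times min{1, |Φ_{μ₁μ₂}|}. -/
theorem deriv_two_phase_bound (μ₁ μ₂ : ℝ)
    (hμ₁ : μ₁ = 1 ∨ μ₁ = -1) (hμ₂ : μ₂ = 1 ∨ μ₂ = -1)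
    (l₁ l₂ : ℕ) (hl : 1 ≤ l₁ + l₂) :
    ∃ C : ℝ, 0 < C ∧ ∀ ξ₁ ξ₂ : ℝ,
      |iteratedDeriv l₁ (fun x => iteratedDeriv l₂ (fun y => Phi2 μ₁ μ₂ x y) ξ₂) ξ₁| ≤
        C * min 1 |Phi2 μ₁ μ₂ ξ₁ ξ₂| := by
  suffices h : ∃ C : ℝ, 0 < C ∧ ∀ ξ₁ ξ₂ : ℝ,
      |iteratedDeriv l₁ (fun x => iteratedDeriv l₂ (fun y => Phi2 μ₁ μ₂ x y) ξ₂) ξ₁| ≤ C ∧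
      |iteratedDeriv l₁ (fun x => iteratedDeriv l₂ (fun y => Phi2 μ₁ μ₂ x y) ξ₂) ξ₁| ≤
        C * |Phi2 μ₁ μ₂ ξ₁ ξ₂| by
    obtain ⟨C, hC, hb⟩ := h
    refine ⟨C, hC, fun ξ₁ ξ₂ => ?_⟩
    rcases le_total (1:ℝ) |Phi2 μ₁ μ₂ ξ₁ ξ₂| with hc | hc
    · rw [min_eq_left hc, mul_one]; exact (hb ξ₁ ξ₂).1
    · rw [min_eq_right hc]; exact (hb ξ₁ ξ₂).2
  have habs1 : |μ₁| = 1 := by rcases hμ₁ with h | h <;> simp [h]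
  have habs2 : |μ₂| = 1 := by rcases hμ₂ with h | h <;> simp [h]
  rcases Nat.eq_zero_or_pos l₂ with h2 | h2
  · -- Case B : l₂ = 0, l₁ = m+1 ≥ 1
    subst h2
    obtain ⟨m, hm⟩ : ∃ m, l₁ = m + 1 := ⟨l₁ - 1, by omega⟩
    subst hm
    have hid : ∀ ξ₁ ξ₂ : ℝ,
        iteratedDeriv (m+1) (fun x => iteratedDeriv 0 (fun y => Phi2 μ₁ μ₂ x y) ξ₂) ξ₁
          = -1 * iteratedDeriv (m+1) Lam (ξ₂ + ξ₁) + μ₁ * iteratedDeriv (m+1) Lam ξ₁ := by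
      intro ξ₁ ξ₂
      have e : (fun x => iteratedDeriv 0 (fun y => Phi2 μ₁ μ₂ x y) ξ₂)
          = fun x => (-1) * Lam (ξ₂ + x) + μ₁ * Lam x + μ₂ * Lam ξ₂ := by
        funext x
        rw [iteratedDeriv_zero]
        show Phi2 μ₁ μ₂ x ξ₂ = _
        unfold Phi2
        rw [add_comm x ξ₂]
        ring
      rw [e, iter_shift Lam contDiff_Lam (-1) μ₁ ξ₂ (μ₂ * Lam ξ₂) m ξ₁]
    rcases Nat.eq_zero_or_pos m with hm0 | hm0
    · -- l₁ = 1
      subst hm0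
      refine ⟨4, by norm_num, fun ξ₁ ξ₂ => ?_⟩
      rw [hid ξ₁ ξ₂, iter_one_eq, iter_one_eq]
      have h1 := abs_div_Lam_le_one (ξ₂ + ξ₁)
      have h2 := abs_div_Lam_le_one ξ₁
      have hub : |(-1) * ((ξ₂+ξ₁) / Lam (ξ₂+ξ₁)) + μ₁ * (ξ₁ / Lam ξ₁)| ≤ 2 := by
        calc |(-1) * ((ξ₂+ξ₁) / Lam (ξ₂+ξ₁)) + μ₁ * (ξ₁ / Lam ξ₁)|
            ≤ |(-1) * ((ξ₂+ξ₁) / Lam (ξ₂+ξ₁))| + |μ₁ * (ξ₁ / Lam ξ₁)| := abs_add_le _ _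
          _ ≤ 2 := by
              rw [abs_mul, abs_mul, habs1, one_mul]
              simp only [abs_neg, abs_one, one_mul]
              linarith
      refine ⟨by linarith, ?_⟩
      set u := μ₁ * ξ₁ with hu
      have hμξ : μ₁ * (ξ₁ / Lam ξ₁) = u / Lam u := by
        rw [hu, Lam_sign hμ₁, mul_div_assoc]
      obtain ⟨p1, p2, p3⟩ := phi_low μ₁ μ₂ hμ₁ hμ₂ ξ₁ ξ₂
      rcases le_or_gt 0 (u * (ξ₂ + ξ₁)) with hal | hal
      · have hA := aligned u (ξ₂ + ξ₁) hal
        have hre : (-1) * ((ξ₂+ξ₁) / Lam (ξ₂+ξ₁)) + μ₁ * (ξ₁ / Lam ξ₁)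
            = -((ξ₂+ξ₁) / Lam (ξ₂+ξ₁) - u / Lam u) := by rw [hμξ]; ring
        rw [hre, abs_neg, abs_sub_comm]
        have hLu : Lam u = Lam ξ₁ := Lam_sign hμ₁ ξ₁
        have hcomm : Lam (ξ₂ + ξ₁) = Lam (ξ₁ + ξ₂) := by rw [add_comm]
        have q1 : 1 / Lam ξ₁ ≤ 2 * |Phi2 μ₁ μ₂ ξ₁ ξ₂| := half_to_two (Lam_pos ξ₁) p1
        have q3 : 1 / Lam (ξ₁+ξ₂) ≤ 2 * |Phi2 μ₁ μ₂ ξ₁ ξ₂| := half_to_two (Lam_pos _) p3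
        rw [hLu, hcomm] at hA ⊢
        linarith
      · have hanti : 1 ≤ |Phi2 μ₁ μ₂ ξ₁ ξ₂| := by
          apply anti_aligned μ₁ μ₂ hμ₁ hμ₂ ξ₁ ξ₂
          rw [add_comm ξ₁ ξ₂]
          exact hal
        linarith
    · -- l₁ = m+1 ≥ 2
      obtain ⟨k, hk⟩ : ∃ k, m = k + 1 := ⟨m - 1, by omega⟩
      subst hk
      obtain ⟨A, hA, hAb⟩ := iter_le_inv k
      refine ⟨4 * A, by linarith, fun ξ₁ ξ₂ => ?_⟩
      rw [hid ξ₁ ξ₂]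
      have hb1 := hAb (ξ₂ + ξ₁)
      have hb2 := hAb ξ₁
      have hd1 : A / Lam (ξ₂ + ξ₁) ≤ A := div_le_self hA.le (one_le_Lam _)
      have hd2 : A / Lam ξ₁ ≤ A := div_le_self hA.le (one_le_Lam _)
      have htri : |(-1) * iteratedDeriv (k+1+1) Lam (ξ₂ + ξ₁) + μ₁ * iteratedDeriv (k+1+1) Lam ξ₁|
          ≤ A / Lam (ξ₂ + ξ₁) + A / Lam ξ₁ := by
        calc |(-1) * iteratedDeriv (k+1+1) Lam (ξ₂ + ξ₁) + μ₁ * iteratedDeriv (k+1+1) Lam ξ₁|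
            ≤ |(-1) * iteratedDeriv (k+1+1) Lam (ξ₂ + ξ₁)| + |μ₁ * iteratedDeriv (k+1+1) Lam ξ₁| :=
              abs_add_le _ _
          _ ≤ A / Lam (ξ₂ + ξ₁) + A / Lam ξ₁ := by
              rw [abs_mul, abs_mul, habs1, one_mul]
              simp only [abs_neg, abs_one, one_mul]
              exact add_le_add hb1 hb2
      obtain ⟨p1, p2, p3⟩ := phi_low μ₁ μ₂ hμ₁ hμ₂ ξ₁ ξ₂
      have q1 : 1 / Lam ξ₁ ≤ 2 * |Phi2 μ₁ μ₂ ξ₁ ξ₂| := half_to_two (Lam_pos ξ₁) p1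
      have q3 : 1 / Lam (ξ₁+ξ₂) ≤ 2 * |Phi2 μ₁ μ₂ ξ₁ ξ₂| := half_to_two (Lam_pos _) p3
      have hAdiv1 : A / Lam (ξ₂ + ξ₁) ≤ 2 * A * |Phi2 μ₁ μ₂ ξ₁ ξ₂| := by
        rw [div_eq_mul_one_div, add_comm ξ₂ ξ₁]
        calc A * (1 / Lam (ξ₁ + ξ₂)) ≤ A * (2 * |Phi2 μ₁ μ₂ ξ₁ ξ₂|) :=
              mul_le_mul_of_nonneg_left q3 hA.le
          _ = 2 * A * |Phi2 μ₁ μ₂ ξ₁ ξ₂| := by ring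
      have hAdiv2 : A / Lam ξ₁ ≤ 2 * A * |Phi2 μ₁ μ₂ ξ₁ ξ₂| := by
        rw [div_eq_mul_one_div]
        calc A * (1 / Lam ξ₁) ≤ A * (2 * |Phi2 μ₁ μ₂ ξ₁ ξ₂|) :=
              mul_le_mul_of_nonneg_left q1 hA.le
          _ = 2 * A * |Phi2 μ₁ μ₂ ξ₁ ξ₂| := by ring
      exact ⟨by linarith, by linarith⟩
  · -- l₂ = k + 1 ≥ 1
    obtain ⟨k, hk⟩ : ∃ k, l₂ = k + 1 := ⟨l₂ - 1, by omega⟩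
    subst hk
    rcases Nat.eq_zero_or_pos l₁ with h1 | h1
    · -- Case C : l₁ = 0
      subst h1
      have hid : ∀ ξ₁ ξ₂ : ℝ,
          iteratedDeriv 0 (fun x => iteratedDeriv (k+1) (fun y => Phi2 μ₁ μ₂ x y) ξ₂) ξ₁
            = -1 * iteratedDeriv (k+1) Lam (ξ₁ + ξ₂) + μ₂ * iteratedDeriv (k+1) Lam ξ₂ := by
        intro ξ₁ ξ₂
        rw [iteratedDeriv_zero]
        have e : (fun y => Phi2 μ₁ μ₂ ξ₁ y)
            = fun y => (-1) * Lam (ξ₁ + y) + μ₂ * Lam y + μ₁ * Lam ξ₁ := by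
          funext y; unfold Phi2; ring
        rw [e, iter_shift Lam contDiff_Lam (-1) μ₂ ξ₁ (μ₁ * Lam ξ₁) k ξ₂]
      rcases Nat.eq_zero_or_pos k with hk0 | hk0
      · -- l₂ = 1
        subst hk0
        refine ⟨4, by norm_num, fun ξ₁ ξ₂ => ?_⟩
        rw [hid ξ₁ ξ₂, iter_one_eq, iter_one_eq]
        have h1 := abs_div_Lam_le_one (ξ₁ + ξ₂)
        have h2 := abs_div_Lam_le_one ξ₂
        have hub : |(-1) * ((ξ₁+ξ₂) / Lam (ξ₁+ξ₂)) + μ₂ * (ξ₂ / Lam ξ₂)| ≤ 2 := by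
          calc |(-1) * ((ξ₁+ξ₂) / Lam (ξ₁+ξ₂)) + μ₂ * (ξ₂ / Lam ξ₂)|
              ≤ |(-1) * ((ξ₁+ξ₂) / Lam (ξ₁+ξ₂))| + |μ₂ * (ξ₂ / Lam ξ₂)| := abs_add_le _ _
            _ ≤ 2 := by
                rw [abs_mul, abs_mul, habs2, one_mul]
                simp only [abs_neg, abs_one, one_mul]
                linarith
        refine ⟨by linarith, ?_⟩
        set u := μ₂ * ξ₂ with hu
        have hμξ : μ₂ * (ξ₂ / Lam ξ₂) = u / Lam u := by
          rw [hu, Lam_sign hμ₂, mul_div_assoc]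
        obtain ⟨p1, p2, p3⟩ := phi_low μ₁ μ₂ hμ₁ hμ₂ ξ₁ ξ₂
        rcases le_or_gt 0 (u * (ξ₁ + ξ₂)) with hal | hal
        · have hA := aligned u (ξ₁ + ξ₂) hal
          have hre : (-1) * ((ξ₁+ξ₂) / Lam (ξ₁+ξ₂)) + μ₂ * (ξ₂ / Lam ξ₂)
              = -((ξ₁+ξ₂) / Lam (ξ₁+ξ₂) - u / Lam u) := by rw [hμξ]; ring
          rw [hre, abs_neg, abs_sub_comm]
          have hLu : Lam u = Lam ξ₂ := Lam_sign hμ₂ ξ₂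
          have q2 : 1 / Lam ξ₂ ≤ 2 * |Phi2 μ₁ μ₂ ξ₁ ξ₂| := half_to_two (Lam_pos ξ₂) p2
          have q3 : 1 / Lam (ξ₁+ξ₂) ≤ 2 * |Phi2 μ₁ μ₂ ξ₁ ξ₂| := half_to_two (Lam_pos _) p3
          rw [hLu] at hA ⊢
          linarith
        · have hanti : 1 ≤ |Phi2 μ₁ μ₂ ξ₁ ξ₂| := by
            rw [Phi2_symm]
            apply anti_aligned μ₂ μ₁ hμ₂ hμ₁ ξ₂ ξ₁
            rw [add_comm ξ₂ ξ₁]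
            exact hal
          linarith
      · -- l₂ ≥ 2
        obtain ⟨j, hj⟩ : ∃ j, k = j + 1 := ⟨k - 1, by omega⟩
        subst hj
        obtain ⟨A, hA, hAb⟩ := iter_le_inv j
        refine ⟨4 * A, by linarith, fun ξ₁ ξ₂ => ?_⟩
        rw [hid ξ₁ ξ₂]
        have hb1 := hAb (ξ₁ + ξ₂)
        have hb2 := hAb ξ₂
        have hd1 : A / Lam (ξ₁ + ξ₂) ≤ A := div_le_self hA.le (one_le_Lam _)
        have hd2 : A / Lam ξ₂ ≤ A := div_le_self hA.le (one_le_Lam _)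
        have htri : |(-1) * iteratedDeriv (j+1+1) Lam (ξ₁ + ξ₂) + μ₂ * iteratedDeriv (j+1+1) Lam ξ₂|
            ≤ A / Lam (ξ₁ + ξ₂) + A / Lam ξ₂ := by
          calc |(-1) * iteratedDeriv (j+1+1) Lam (ξ₁ + ξ₂) + μ₂ * iteratedDeriv (j+1+1) Lam ξ₂|
              ≤ |(-1) * iteratedDeriv (j+1+1) Lam (ξ₁ + ξ₂)| +
                |μ₂ * iteratedDeriv (j+1+1) Lam ξ₂| := abs_add_le _ _
            _ ≤ A / Lam (ξ₁ + ξ₂) + A / Lam ξ₂ := by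
                rw [abs_mul, abs_mul, habs2, one_mul]
                simp only [abs_neg, abs_one, one_mul]
                exact add_le_add hb1 hb2
        obtain ⟨p1, p2, p3⟩ := phi_low μ₁ μ₂ hμ₁ hμ₂ ξ₁ ξ₂
        have q2 : 1 / Lam ξ₂ ≤ 2 * |Phi2 μ₁ μ₂ ξ₁ ξ₂| := half_to_two (Lam_pos ξ₂) p2
        have q3 : 1 / Lam (ξ₁+ξ₂) ≤ 2 * |Phi2 μ₁ μ₂ ξ₁ ξ₂| := half_to_two (Lam_pos _) p3
        have hAdiv1 : A / Lam (ξ₁ + ξ₂) ≤ 2 * A * |Phi2 μ₁ μ₂ ξ₁ ξ₂| := by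
          rw [div_eq_mul_one_div]
          calc A * (1 / Lam (ξ₁ + ξ₂)) ≤ A * (2 * |Phi2 μ₁ μ₂ ξ₁ ξ₂|) :=
                mul_le_mul_of_nonneg_left q3 hA.le
            _ = 2 * A * |Phi2 μ₁ μ₂ ξ₁ ξ₂| := by ring
        have hAdiv2 : A / Lam ξ₂ ≤ 2 * A * |Phi2 μ₁ μ₂ ξ₁ ξ₂| := by
          rw [div_eq_mul_one_div]
          calc A * (1 / Lam ξ₂) ≤ A * (2 * |Phi2 μ₁ μ₂ ξ₁ ξ₂|) :=
                mul_le_mul_of_nonneg_left q2 hA.le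
            _ = 2 * A * |Phi2 μ₁ μ₂ ξ₁ ξ₂| := by ring
        exact ⟨by linarith, by linarith⟩
    · -- Case A : l₁ = j+1, l₂ = k+1
      obtain ⟨j, hj⟩ : ∃ j, l₁ = j + 1 := ⟨l₁ - 1, by omega⟩
      subst hj
      have hGsmooth := contDiff_iteratedDeriv_Lam (k+1)
      have hid : ∀ ξ₁ ξ₂ : ℝ,
          iteratedDeriv (j+1) (fun x => iteratedDeriv (k+1) (fun y => Phi2 μ₁ μ₂ x y) ξ₂) ξ₁
            = -1 * iteratedDeriv (j+1+(k+1)) Lam (ξ₂ + ξ₁)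
              + 0 * iteratedDeriv (j+1+(k+1)) Lam ξ₁ := by
        intro ξ₁ ξ₂
        have e : (fun x => iteratedDeriv (k+1) (fun y => Phi2 μ₁ μ₂ x y) ξ₂)
            = fun x => (-1) * iteratedDeriv (k+1) Lam (ξ₂ + x)
                + 0 * iteratedDeriv (k+1) Lam x + μ₂ * iteratedDeriv (k+1) Lam ξ₂ := by
          funext x
          have e2 : (fun y => Phi2 μ₁ μ₂ x y)
              = fun y => (-1) * Lam (x + y) + μ₂ * Lam y + μ₁ * Lam x := by
            funext y; unfold Phi2; ring
          rw [e2, iter_shift Lam contDiff_Lam (-1) μ₂ x (μ₁ * Lam x) k ξ₂, add_comm x ξ₂]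
          ring
        rw [e, iter_shift (iteratedDeriv (k+1) Lam) hGsmooth (-1) 0 ξ₂
          (μ₂ * iteratedDeriv (k+1) Lam ξ₂) j ξ₁]
        rw [show iteratedDeriv (j+1) (iteratedDeriv (k+1) Lam) = iteratedDeriv (j+1+(k+1)) Lam
          from iter_iter (j+1) (k+1) Lam]
      obtain ⟨A, hA, hAb⟩ := iter_le_inv (j + k)
      have hsum : j + 1 + (k + 1) = j + k + 2 := by omega
      refine ⟨2 * A, by linarith, fun ξ₁ ξ₂ => ?_⟩
      rw [hid ξ₁ ξ₂, hsum]
      have habs : |(-1) * iteratedDeriv (j+k+2) Lam (ξ₂ + ξ₁)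
          + 0 * iteratedDeriv (j+k+2) Lam ξ₁| = |iteratedDeriv (j+k+2) Lam (ξ₂ + ξ₁)| := by
        rw [zero_mul, add_zero, neg_one_mul, abs_neg]
      rw [habs]
      have hb1 := hAb (ξ₂ + ξ₁)
      have hd1 : A / Lam (ξ₂ + ξ₁) ≤ A := div_le_self hA.le (one_le_Lam _)
      obtain ⟨p1, p2, p3⟩ := phi_low μ₁ μ₂ hμ₁ hμ₂ ξ₁ ξ₂
      have q3 : 1 / Lam (ξ₁+ξ₂) ≤ 2 * |Phi2 μ₁ μ₂ ξ₁ ξ₂| := half_to_two (Lam_pos _) p3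
      have hAdiv1 : A / Lam (ξ₂ + ξ₁) ≤ 2 * A * |Phi2 μ₁ μ₂ ξ₁ ξ₂| := by
        rw [div_eq_mul_one_div, add_comm ξ₂ ξ₁]
        calc A * (1 / Lam (ξ₁ + ξ₂)) ≤ A * (2 * |Phi2 μ₁ μ₂ ξ₁ ξ₂|) :=
              mul_le_mul_of_nonneg_left q3 hA.le
          _ = 2 * A * |Phi2 μ₁ μ₂ ξ₁ ξ₂| := by ring
      exact ⟨by linarith, by linarith⟩
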